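/- A Mal'cev term m (satisfying Σ ⊢ m(x,y,y) ≈ x and Σ ⊢ m(x,x,y) ≈ y) is weakly independent of each of its three argument positions, but if V(Σ) has an algebra with at least two elements, then m is not independent of any of its argument positions. -/
import Mathlib


universe u

/-- A finitary algebraic signature. -/
structure Sig where
  ops : Type
  ar : ops → ℕ

namespace UA

/-- Terms over the signature `S` with variables from `X`. -/
inductive Term (S : Sig) (X : Type) : Type where
  | var : X → Term S X
  | app : (o : S.ops) → (Fin (S.ar o) → Term S X) → Term S X

/-- Simultaneous substitution of terms for variables. -/
def Term.subst {S : Sig} {X Y : Type} (σ : X → Term S Y) : Term S X → Term S Y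
  | .var x => σ x
  | .app o ts => .app o fun i => (ts i).subst σ

/-- Renaming (substitution of variables for variables). -/
def Term.rename {S : Sig} {X Y : Type} (φ : X → Y) (t : Term S X) : Term S Y :=
  t.subst fun x => .var (φ x)

/-- Equational provability from the set `Γ` of axioms (pairs of terms over the
countable variable set `ℕ`), over arbitrary variable sets. -/
inductive Eqv {S : Sig} (Γ : Set (Term S ℕ × Term S ℕ)) :
    {X : Type} → Term S X → Term S X → Prop where
  | axm {X : Type} {l r : Term S ℕ} (h : (l, r) ∈ Γ) (σ : ℕ → Term S X) :
      Eqv Γ (l.subst σ) (r.subst σ)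
  | refl {X : Type} (t : Term S X) : Eqv Γ t t
  | symm {X : Type} {t u : Term S X} : Eqv Γ t u → Eqv Γ u t
  | trans {X : Type} {t u v : Term S X} : Eqv Γ t u → Eqv Γ u v → Eqv Γ t v
  | congr {X : Type} (o : S.ops) {ts us : Fin (S.ar o) → Term S X} :
      (∀ i, Eqv Γ (ts i) (us i)) → Eqv Γ (.app o ts) (.app o us)
  | sbst {X Y : Type} {t u : Term S X} (σ : X → Term S Y) :
      Eqv Γ t u → Eqv Γ (t.subst σ) (u.subst σ)

def termSetoid {S : Sig} (Γ : Set (Term S ℕ × Term S ℕ)) (X : Type) : Setoid (Term S X) :=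
  ⟨Eqv Γ, ⟨fun t => .refl t, fun h => h.symm, fun h h' => h.trans h'⟩⟩

/-- The free algebra over the variable set `X` in the variety axiomatized by `Γ`:
terms modulo `Γ`-provable equality.  This is the object part of the free-algebra
functor `F_Σ`. -/
def FreeAlg {S : Sig} (Γ : Set (Term S ℕ × Term S ℕ)) (X : Type) : Type :=
  Quotient (termSetoid Γ X)

/-- The action of the free-algebra functor `F_Σ` on maps: variable substitution. -/
def FreeAlg.map {S : Sig} {Γ : Set (Term S ℕ × Term S ℕ)} {X Y : Type} (φ : X → Y) :
    FreeAlg Γ X → FreeAlg Γ Y :=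
  Quotient.map (Term.rename φ) fun _ _ h => h.sbst _

end UA

namespace UA

variable {S : Sig}

/-- A ternary term `t` is *weakly independent* of its `k`-th argument position
modulo `Γ`: substituting a variable `x` in position `k` and arbitrary variables
elsewhere makes `t` provably equal to a term `q` in a single variable `y ≠ x`. -/
def WeakIndepAt (Γ : Set (Term S ℕ × Term S ℕ)) (t : Term S (Fin 3)) (k : Fin 3) : Prop :=
  ∃ (x y : ℕ) (v : Fin 3 → ℕ) (q : Term S Unit),
    x ≠ y ∧ v k = x ∧ Eqv Γ (t.rename v) (q.rename fun _ => y)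

/-- A ternary term `t` is *independent* of its `k`-th argument position modulo `Γ`:
its value is provably unchanged when the variable in position `k` is replaced by a
fresh one (all variables distinct). -/
def IndepAt (Γ : Set (Term S ℕ × Term S ℕ)) (t : Term S (Fin 3)) (k : Fin 3) : Prop :=
  Eqv Γ (t.rename fun j => if j = k then 0 else (j : ℕ) + 2)
        (t.rename fun j => if j = k then 1 else (j : ℕ) + 2)

theorem Term.subst_subst {X Y Z : Type} (σ : X → Term S Y) (τ : Y → Term S Z)
    (t : Term S X) : (t.subst σ).subst τ = t.subst (fun x => (σ x).subst τ) := by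
  induction t with
  | var x => rfl
  | app o ts ih => simp only [Term.subst]; exact congrArg _ (funext ih)

theorem Term.rename_rename {X Y Z : Type} (a : X → Y) (φ : Y → Z) (t : Term S X) :
    (t.rename a).rename φ = t.rename (fun x => φ (a x)) :=
  Term.subst_subst _ _ t

theorem eqv_rename {Γ : Set (Term S ℕ × Term S ℕ)} {X Y : Type} {t u : Term S X}
    (h : Eqv Γ t u) (φ : X → Y) : Eqv Γ (t.rename φ) (u.rename φ) :=
  h.sbst _

theorem key {Γ : Set (Term S ℕ × Term S ℕ)} {m : Term S (Fin 3)} {a b : Fin 3 → ℕ}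
    (h : Eqv Γ (m.rename a) (m.rename b)) (φ : ℕ → ℕ) :
    Eqv Γ (m.rename (fun j => φ (a j))) (m.rename (fun j => φ (b j))) := by
  have := eqv_rename h φ
  rwa [Term.rename_rename, Term.rename_rename] at this

theorem key1 {Γ : Set (Term S ℕ × Term S ℕ)} {m : Term S (Fin 3)}
    (hm₁ : Eqv Γ (m.rename ![0, 1, 1]) (Term.var 0 : Term S ℕ)) (φ : ℕ → ℕ) :
    Eqv Γ (m.rename (fun j => φ (![0,1,1] j))) (Term.var (φ 0) : Term S ℕ) := by
  have := eqv_rename hm₁ φ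
  rwa [Term.rename_rename] at this

theorem key2 {Γ : Set (Term S ℕ × Term S ℕ)} {m : Term S (Fin 3)}
    (hm₂ : Eqv Γ (m.rename ![0, 0, 1]) (Term.var 1 : Term S ℕ)) (φ : ℕ → ℕ) :
    Eqv Γ (m.rename (fun j => φ (![0,0,1] j))) (Term.var (φ 1) : Term S ℕ) := by
  have := eqv_rename hm₂ φ
  rwa [Term.rename_rename] at this

/-- A Mal'cev term is weakly independent of each of its three argument positions,
but (provided `Σ` is consistent, i.e. `V(Σ)` has an algebra with at least two
elements) independent of none of them. -/
theorem malcev_weakIndep_not_indep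
    (Γ : Set (Term S ℕ × Term S ℕ)) (m : Term S (Fin 3))
    (hm₁ : Eqv Γ (m.rename ![0, 1, 1]) (Term.var 0 : Term S ℕ))
    (hm₂ : Eqv Γ (m.rename ![0, 0, 1]) (Term.var 1 : Term S ℕ)) :
    (∀ k : Fin 3, WeakIndepAt Γ m k) ∧
    (¬ Eqv Γ (Term.var 0 : Term S ℕ) (Term.var 1) → ∀ k : Fin 3, ¬ IndepAt Γ m k) := by
  constructor
  · intro k
    fin_cases k
    · exact ⟨0, 1, ![0, 0, 1], .var (), by decide, rfl, hm₂⟩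
    · exact ⟨0, 1, ![0, 0, 1], .var (), by decide, rfl, hm₂⟩
    · refine ⟨0, 1, ![1, 0, 0], .var (), by decide, rfl, ?_⟩
      have h := key1 hm₁ (fun n => 1 - n)
      have e : (fun j => (fun n => 1 - n) (![0,1,1] j)) = ![1, 0, 0] := by
        funext j; fin_cases j <;> rfl
      rw [e] at h
      exact h
  · intro hne k hI
    fin_cases k
    · -- m(0,3,4) ≈ m(1,3,4); send 0↦0, everything else ↦ 1
      unfold IndepAt at hI
      have h := key hI (fun n => if n = 0 then 0 else 1)
      have e₁ : (fun j : Fin 3 => (fun n => if n = 0 then 0 else 1)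
          (if j = (⟨0, by omega⟩ : Fin 3) then 0 else (j : ℕ) + 2)) = ![0, 1, 1] := by
        funext j; fin_cases j <;> rfl
      have e₂ : (fun j : Fin 3 => (fun n => if n = 0 then 0 else 1)
          (if j = (⟨0, by omega⟩ : Fin 3) then 1 else (j : ℕ) + 2)) = (fun _ => 1) := by
        funext j; fin_cases j <;> rfl
      rw [e₁, e₂] at h
      have h1 : Eqv Γ (m.rename (fun _ => 1)) (Term.var 1 : Term S ℕ) := by
        have := key1 hm₁ (fun _ => 1)
        simpa using this
      exact hne (hm₁.symm.trans (h.trans h1))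
    · -- m(2,0,4) ≈ m(2,1,4); 2↦0, 0↦0, 1↦1, 4↦1
      unfold IndepAt at hI
      have h := key hI (fun n => if n = 2 then 0 else if n = 0 then 0 else 1)
      have e₁ : (fun j : Fin 3 => (fun n => if n = 2 then 0 else if n = 0 then 0 else 1)
          (if j = (⟨1, by omega⟩ : Fin 3) then 0 else (j : ℕ) + 2)) = ![0, 0, 1] := by
        funext j; fin_cases j <;> rfl
      have e₂ : (fun j : Fin 3 => (fun n => if n = 2 then 0 else if n = 0 then 0 else 1)
          (if j = (⟨1, by omega⟩ : Fin 3) then 1 else (j : ℕ) + 2)) = ![0, 1, 1] := by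
        funext j; fin_cases j <;> rfl
      rw [e₁, e₂] at h
      exact hne ((hm₂.symm.trans (h.trans hm₁)).symm)
    · -- m(2,3,0) ≈ m(2,3,1); 2↦0, 3↦0, 0↦1, 1↦0
      unfold IndepAt at hI
      have h := key hI (fun n => if n = 0 then 1 else 0)
      have e₁ : (fun j : Fin 3 => (fun n => if n = 0 then 1 else 0)
          (if j = (⟨2, by omega⟩ : Fin 3) then 0 else (j : ℕ) + 2)) = ![0, 0, 1] := by
        funext j; fin_cases j <;> rfl
      have e₂ : (fun j : Fin 3 => (fun n => if n = 0 then 1 else 0)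
          (if j = (⟨2, by omega⟩ : Fin 3) then 1 else (j : ℕ) + 2)) = (fun _ => 0) := by
        funext j; fin_cases j <;> rfl
      rw [e₁, e₂] at h
      have h0 : Eqv Γ (m.rename (fun _ => 0)) (Term.var 0 : Term S ℕ) := by
        have := key2 hm₂ (fun _ => 0)
        simpa using this
      exact hne ((hm₂.symm.trans (h.trans h0)).symm)

end UA
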